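/- Let m : ℕ → ℚ satisfy m(0) = 1 and (2n+1)·m(n) = ∑_{k=0}^{n-1} m(k)·m(n-1-k) for n ≥ 1. Then the generating function m(x) = ∑_{k≥0} m(k) x^k equals tan(√x)/√x, i.e., m(n) equals the coefficient of x^n in the Taylor expansion of tan(√x)/√x. -/

import Mathlib

open Finset PowerSeries

/-- spread coefficients of `m` to odd indices -/
def MCspread (m : ℕ → ℚ) : ℕ → ℚ := fun n => if n % 2 = 1 then m (n / 2) else 0
/-- coefficients of cosine -/
def MCcos : ℕ → ℚ := fun n => if n % 2 = 0 then (-1)^(n/2) / (Nat.factorial n : ℚ) else 0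
/-- coefficients of sine -/
def MCsin : ℕ → ℚ := fun n => if n % 2 = 1 then (-1)^(n/2) / (Nat.factorial n : ℚ) else 0

lemma MC_deriv_T (m : ℕ → ℚ) (h0 : m 0 = 1)
    (hrec : ∀ n : ℕ, 1 ≤ n →
      (2 * (n : ℚ) + 1) * m n = ∑ k ∈ Finset.range n, m k * m (n - 1 - k)) :
    d⁄dX ℚ (PowerSeries.mk (MCspread m)) =
      1 + (PowerSeries.mk (MCspread m)) * (PowerSeries.mk (MCspread m)) := by
  ext n
  rw [coeff_derivative, map_add, coeff_one, coeff_mul, coeff_mk,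
    Finset.Nat.sum_antidiagonal_eq_sum_range_succ_mk]
  simp only [coeff_mk]
  rcases Nat.even_or_odd n with he | ho
  · -- n even, n = 2r
    obtain ⟨r, rfl⟩ := he
    have hmod : (r + r + 1) % 2 = 1 := by omega
    have hdiv : (r + r + 1) / 2 = r := by omega
    rw [MCspread]; simp only [hmod, hdiv, if_pos]
    rcases Nat.eq_zero_or_pos r with rfl | hr
    · norm_num [MCspread, h0]
    · have hne : r + r ≠ 0 := by omega
      rw [if_neg hne, zero_add]
      have key := hrec r (by omega)
      have himg : ∑ k ∈ Finset.range (r + r + 1), MCspread m k * MCspread m (r + r - k)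
          = ∑ a ∈ Finset.range r, m a * m (r - 1 - a) := by
        have e1 : ∑ k ∈ (Finset.range r).image (fun a => 2*a+1),
            MCspread m k * MCspread m (r + r - k)
            = ∑ k ∈ Finset.range (r + r + 1), MCspread m k * MCspread m (r + r - k) := by
          apply Finset.sum_subset
          · intro k hk; simp only [Finset.mem_image, Finset.mem_range] at *
            obtain ⟨a, ha, rfl⟩ := hk; omega
          · intro k hk hk2
            simp only [Finset.mem_image, Finset.mem_range] at hk hk2
            have hkeven : k % 2 = 0 := by
              by_contra h
              exact hk2 ⟨k / 2, by omega, by omega⟩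
            simp [MCspread, hkeven]
        have e2 : ∑ k ∈ (Finset.range r).image (fun a => 2*a+1),
            MCspread m k * MCspread m (r + r - k)
            = ∑ a ∈ Finset.range r, MCspread m (2*a+1) * MCspread m (r + r - (2*a+1)) := by
          apply Finset.sum_image
          intro a _ b _ h; beta_reduce at h; omega
        rw [← e1, e2]
        apply Finset.sum_congr rfl
        intro a ha
        simp only [Finset.mem_range] at ha
        have h1 : (2*a+1) % 2 = 1 := by omega
        have h2 : (2*a+1) / 2 = a := by omega
        have h3 : (r + r - (2*a+1)) % 2 = 1 := by omega
        have h4 : (r + r - (2*a+1)) / 2 = r - 1 - a := by omega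
        simp [MCspread, h1, h2, h3, h4]
      rw [Nat.succ_eq_add_one, himg, ← key]
      push_cast
      ring
  · -- n odd: both sides zero
    obtain ⟨r, rfl⟩ := ho
    have h1 : (2*r+1+1) % 2 = 0 := by omega
    rw [MCspread]; simp only [h1]
    rw [if_neg (by omega : ¬ (2*r+1) = 0)]
    norm_num
    symm
    apply Finset.sum_eq_zero
    intro k hk
    simp only [Finset.mem_range] at hk
    rcases Nat.even_or_odd k with hke | hko
    · have : k % 2 = 0 := Nat.even_iff.mp hke
      simp [MCspread, this]
    · have hk1 : k % 2 = 1 := Nat.odd_iff.mp hko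
      have : (2*r+1-k) % 2 = 0 := by omega
      simp [MCspread, this]

lemma MC_deriv_S : d⁄dX ℚ (PowerSeries.mk MCsin) = PowerSeries.mk MCcos := by
  ext n
  rw [coeff_derivative, coeff_mk, coeff_mk]
  rcases Nat.even_or_odd n with he | ho
  · obtain ⟨r, rfl⟩ := he
    have h1 : (r + r + 1) % 2 = 1 := by omega
    have h2 : (r + r) % 2 = 0 := by omega
    have h3 : (r + r + 1) / 2 = r := by omega
    have h4 : (r + r) / 2 = r := by omega
    simp only [MCsin, MCcos, h1, h2, h3, h4, if_pos, if_true]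
    rw [Nat.factorial_succ]
    have hf : ((r+r).factorial : ℚ) ≠ 0 := by
      exact_mod_cast Nat.factorial_ne_zero _
    have hr1 : ((r:ℚ) + r + 1) ≠ 0 := by positivity
    field_simp
    push_cast; ring
  · obtain ⟨r, rfl⟩ := ho
    have h1 : (2*r + 1 + 1) % 2 = 0 := by omega
    have h2 : (2*r + 1) % 2 = 1 := by omega
    simp [MCsin, MCcos, h1, h2]

lemma MC_deriv_C : d⁄dX ℚ (PowerSeries.mk MCcos) = - PowerSeries.mk MCsin := by
  ext n
  rw [coeff_derivative, coeff_mk, map_neg, coeff_mk]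
  rcases Nat.even_or_odd n with he | ho
  · obtain ⟨r, rfl⟩ := he
    have h1 : (r + r + 1) % 2 = 1 := by omega
    have h2 : (r + r) % 2 = 0 := by omega
    simp [MCcos, MCsin, h1, h2]
  · obtain ⟨r, rfl⟩ := ho
    have h1 : (2*r + 1 + 1) % 2 = 0 := by omega
    have h2 : (2*r + 1) % 2 = 1 := by omega
    have h3 : (2*r + 1 + 1) / 2 = r + 1 := by omega
    have h4 : (2*r + 1) / 2 = r := by omega
    simp only [MCcos, MCsin, h1, h2, h3, h4, if_pos, if_true]
    rw [Nat.factorial_succ]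
    have hf : ((2*r+1).factorial : ℚ) ≠ 0 := by
      exact_mod_cast Nat.factorial_ne_zero _
    have hr1 : ((2*(r:ℚ)) + 1 + 1) ≠ 0 := by positivity
    field_simp
    push_cast; ring

lemma MC_conv (m : ℕ → ℚ) (h0 : m 0 = 1)
    (hrec : ∀ n : ℕ, 1 ≤ n →
      (2 * (n : ℚ) + 1) * m n = ∑ k ∈ Finset.range n, m k * m (n - 1 - k)) (n : ℕ) :
    ∑ ij ∈ Finset.HasAntidiagonal.antidiagonal n, MCcos ij.1 * MCspread m ij.2 = MCsin n := by
  set T := PowerSeries.mk (MCspread m)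
  set C := PowerSeries.mk MCcos
  set S := PowerSeries.mk MCsin
  have hD : d⁄dX ℚ (C * T - S) = T * (C * T - S) := by
    rw [map_sub, Derivation.leibniz, MC_deriv_S, MC_deriv_C, MC_deriv_T m h0 hrec,
      smul_eq_mul, smul_eq_mul]
    ring
  have hzero : ∀ n, PowerSeries.coeff n (C * T - S) = 0 := by
    intro n
    induction n using Nat.strong_induction_on with
    | _ n ih =>
      match n with
      | 0 =>
        rw [map_sub, PowerSeries.coeff_mul]
        simp [Finset.Nat.antidiagonal_zero, T, C, S, MCcos, MCsin, MCspread]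
      | Nat.succ k =>
        have h1 : PowerSeries.coeff k (d⁄dX ℚ (C * T - S)) =
            PowerSeries.coeff k (T * (C * T - S)) := by rw [hD]
        rw [PowerSeries.coeff_derivative, PowerSeries.coeff_mul] at h1
        have h2 : ∑ ij ∈ Finset.HasAntidiagonal.antidiagonal k,
            PowerSeries.coeff ij.1 T * PowerSeries.coeff ij.2 (C * T - S) = 0 := by
          apply Finset.sum_eq_zero
          intro ij hij
          rw [Finset.HasAntidiagonal.mem_antidiagonal] at hij
          rw [ih ij.2 (by omega), mul_zero]
        rw [h2] at h1
        have : ((k:ℚ) + 1) ≠ 0 := by positivity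
        exact by
          have := mul_eq_zero.mp h1
          tauto
  have hCT : ∀ j, PowerSeries.coeff j (C * T) = PowerSeries.coeff j S := by
    intro j
    have := hzero j
    rw [map_sub, sub_eq_zero] at this
    exact this
  have := hCT n
  rw [PowerSeries.coeff_mul] at this
  simpa [T, C, S] using this

open FormalMultilinearSeries in
lemma MC_ofScalars_coeff (c : ℕ → ℂ) (n : ℕ) :
    (FormalMultilinearSeries.ofScalars ℂ c).coeff n = c n := by
  simp [FormalMultilinearSeries.coeff, FormalMultilinearSeries.ofScalars,
    ContinuousMultilinearMap.mkPiAlgebraFin_apply, Pi.one_def, List.ofFn_const]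

open Real in
lemma MC_hasSum (m : ℕ → ℚ) (h0 : m 0 = 1)
    (hrec : ∀ n : ℕ, 1 ≤ n →
      (2 * (n : ℚ) + 1) * m n = ∑ k ∈ Finset.range n, m k * m (n - 1 - k))
    {y : ℝ} (hy0 : 0 < y) (hy : y < π/2) :
    HasSum (fun k : ℕ => (m k : ℝ) * (y^2)^k) (Real.tan y / y) := by
  have hpi : (0:ℝ) < π / 2 := by positivity
  set Rr : ℝ := (y + π/2)/2 with hRr
  have hRr0 : 0 < Rr := by positivity
  set R : NNReal := ⟨Rr, hRr0.le⟩ with hR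
  have hRy : y < Rr := by simp [hRr]; linarith
  have hRpi : Rr < π/2 := by simp [hRr]; linarith
  have hR0 : 0 < R := by exact_mod_cast hRr0
  -- cos has no zeros on the closed ball
  have hcos_ne : ∀ z : ℂ, ‖z‖ ≤ Rr → Complex.cos z ≠ 0 := by
    intro z hz hc
    obtain ⟨k, rfl⟩ := Complex.cos_eq_zero_iff.mp hc
    have habs : ‖(2 * (k:ℂ) + 1) * ↑π / 2‖ = |2 * (k:ℝ) + 1| * π / 2 := by
      rw [norm_div, norm_mul]
      have : ((2:ℂ) * k + 1) = ((2 * (k:ℝ) + 1 : ℝ) : ℂ) := by push_cast; ring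
      rw [this, Complex.norm_real, Complex.norm_real, Complex.norm_two, Real.norm_eq_abs, Real.norm_eq_abs,
        abs_of_pos Real.pi_pos]
    have hone : (1:ℝ) ≤ |2 * (k:ℝ) + 1| := by
      have : (2 * k + 1 : ℤ) ≠ 0 := by omega
      have h1 : (1:ℤ) ≤ |2 * k + 1| := Int.one_le_abs this
      calc (1:ℝ) ≤ ((|2 * k + 1| : ℤ) : ℝ) := by exact_mod_cast h1
        _ = |2 * (k:ℝ) + 1| := by push_cast; simp
    rw [habs] at hz
    nlinarith [Real.pi_pos]
  have hd : DifferentiableOn ℂ Complex.tan (Metric.closedBall 0 R) := by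
    intro z hz
    refine (Complex.differentiableAt_tan.mpr ?_).differentiableWithinAt
    apply hcos_ne
    exact (by simpa [Complex.dist_eq] using hz : ‖z‖ ≤ (R : ℝ))
  have hps : HasFPowerSeriesOnBall Complex.tan
      (cauchyPowerSeries Complex.tan 0 R) 0 R := hd.hasFPowerSeriesOnBall hR0
  set p := cauchyPowerSeries Complex.tan 0 R with hp
  set q : ℕ → ℂ := fun n => p.coeff n with hq
  set cC : ℕ → ℂ := fun n => ((MCspread m n : ℚ) : ℂ) with hcC
  set coC : ℕ → ℂ := fun n => ((MCcos n : ℚ) : ℂ) with hcoC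
  set sC : ℕ → ℂ := fun n => ((MCsin n : ℚ) : ℂ) with hsC
  -- sin series
  have hsin : ∀ z : ℂ, HasSum (fun n : ℕ => z ^ n • sC n) (Complex.sin z) := by
    intro z
    have hinj : Function.Injective (fun k : ℕ => 2 * k + 1) := by
      intro a b h
      beta_reduce at h
      omega
    rw [← Function.Injective.hasSum_iff hinj ?_]
    · have heq : (fun n : ℕ => z ^ n • sC n) ∘ (fun k : ℕ => 2 * k + 1)
          = fun k : ℕ => (-1) ^ k * z ^ (2 * k + 1) / ((2 * k + 1).factorial : ℂ) := by
        funext k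
        have h1 : (2*k+1) % 2 = 1 := by omega
        have h2 : (2*k+1) / 2 = k := by omega
        simp only [Function.comp, hsC, MCsin, h1, h2, if_pos, smul_eq_mul]
        push_cast
        ring
      rw [heq]
      exact Complex.hasSum_sin z
    · intro x hx
      have hx2 : x % 2 = 0 := by
        by_contra h
        exact hx ⟨x / 2, by show 2 * (x/2) + 1 = x; omega⟩
      simp only [hsC, MCsin, hx2]
      norm_num
  -- cos series
  have hcos : ∀ z : ℂ, HasSum (fun n : ℕ => coC n * z ^ n) (Complex.cos z) := by
    intro z
    have hinj : Function.Injective (fun k : ℕ => 2 * k) := by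
      intro a b h
      beta_reduce at h
      omega
    rw [← Function.Injective.hasSum_iff hinj ?_]
    · have heq : (fun n : ℕ => coC n * z ^ n) ∘ (fun k : ℕ => 2 * k)
          = fun k : ℕ => (-1) ^ k * z ^ (2 * k) / ((2 * k).factorial : ℂ) := by
        funext k
        have h1 : (2*k) % 2 = 0 := by omega
        have h2 : (2*k) / 2 = k := by omega
        simp only [Function.comp, hcoC, MCcos, h1, h2, if_pos]
        push_cast
        ring
      rw [heq]
      exact Complex.hasSum_cos z
    · intro x hx
      have hx2 : x % 2 = 1 := by
        by_contra h
        exact hx ⟨x / 2, by show 2 * (x/2) = x; omega⟩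
      simp only [hcoC, MCcos, hx2]
      norm_num
  -- norm summability of cos series
  have hcos_norm : ∀ z : ℂ, Summable (fun n : ℕ => ‖coC n * z ^ n‖) := by
    intro z
    refine Summable.of_nonneg_of_le (fun n => norm_nonneg _) (fun n => ?_)
      (Real.summable_pow_div_factorial ‖z‖)
    rw [norm_mul, norm_pow]
    have hb : ‖coC n‖ ≤ 1 / (n.factorial : ℝ) := by
      have : coC n = (((MCcos n : ℚ) : ℝ) : ℂ) := by push_cast [hcoC]; norm_num
      rw [this, Complex.norm_real]
      have : |((MCcos n : ℚ) : ℝ)| ≤ 1 / (n.factorial : ℝ) := by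
        rw [MCcos]
        split_ifs
        · push_cast
          rw [abs_div, abs_pow, abs_neg, abs_one, one_pow, abs_of_pos (by positivity)]
        · simp only [Rat.cast_zero, abs_zero]
          positivity
      exact this
    calc ‖coC n‖ * ‖z‖ ^ n ≤ (1 / (n.factorial : ℝ)) * ‖z‖ ^ n := by
          apply mul_le_mul_of_nonneg_right hb (by positivity)
      _ = ‖z‖ ^ n / (n.factorial : ℝ) := by ring
  -- norm summability and hasSum of tan series inside the disc
  have hq_norm : ∀ z : ℂ, ‖z‖ < Rr → Summable (fun n : ℕ => ‖q n * z ^ n‖) := by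
    intro z hz
    have hrad : (‖z‖₊ : ENNReal) < p.radius := by
      refine lt_of_lt_of_le ?_ hps.r_le
      rw [ENNReal.coe_lt_coe]
      exact_mod_cast (hz : ‖z‖ < (R : ℝ))
    have := p.summable_norm_apply (x := z) (by simpa [mem_emetric_ball_zero_iff, enorm_eq_nnnorm] using hrad)
    refine this.congr fun n => ?_
    rw [p.apply_eq_pow_smul_coeff, smul_eq_mul, mul_comm]
  have hq_sum : ∀ z : ℂ, ‖z‖ < Rr → HasSum (fun n : ℕ => q n * z ^ n) (Complex.tan z) := by
    intro z hz
    have hmem : z ∈ Metric.eball (0 : ℂ) R := by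
      rw [mem_emetric_ball_zero_iff, enorm_eq_nnnorm, ENNReal.coe_lt_coe]
      exact_mod_cast (hz : ‖z‖ < (R : ℝ))
    have h2 := hps.hasSum hmem
    rw [zero_add] at h2
    have heq : (fun n : ℕ => p n fun _ => z) = fun n : ℕ => q n * z ^ n := by
      funext n
      rw [p.apply_eq_pow_smul_coeff, smul_eq_mul, mul_comm]
    rwa [heq] at h2
  -- convolution series represents sin near 0
  have hconv : HasFPowerSeriesAt Complex.sin
      (FormalMultilinearSeries.ofScalars ℂ
        (fun n => ∑ ij ∈ Finset.HasAntidiagonal.antidiagonal n, coC ij.1 * q ij.2)) 0 := by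
    rw [hasFPowerSeriesAt_iff]
    filter_upwards [Metric.ball_mem_nhds (0:ℂ) hRr0] with z hz
    have hzR : ‖z‖ < Rr := by
      simpa [Complex.dist_eq] using hz
    simp only [MC_ofScalars_coeff]
    have hsum : Summable fun n : ℕ =>
        ∑ ij ∈ Finset.HasAntidiagonal.antidiagonal n, (coC ij.1 * z^ij.1) * (q ij.2 * z^ij.2) :=
      (summable_norm_sum_mul_antidiagonal_of_summable_norm
        (hcos_norm z) (hq_norm z hzR)).of_norm
    have htsum := tsum_mul_tsum_eq_tsum_sum_antidiagonal_of_summable_norm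
      (hcos_norm z) (hq_norm z hzR)
    have hcosz : Complex.cos z ≠ 0 := hcos_ne z hzR.le
    have hsin_eq : Complex.cos z * Complex.tan z = Complex.sin z := by
      rw [Complex.tan_eq_sin_div_cos]
      field_simp
    have h5 : HasSum (fun n : ℕ =>
        ∑ ij ∈ Finset.HasAntidiagonal.antidiagonal n, (coC ij.1 * z^ij.1) * (q ij.2 * z^ij.2))
        (Complex.sin z) := by
      have h6 := hsum.hasSum
      rwa [← htsum, (hcos z).tsum_eq, (hq_sum z hzR).tsum_eq, hsin_eq] at h6
    have hterm : ∀ n : ℕ, ∑ ij ∈ Finset.HasAntidiagonal.antidiagonal n, (coC ij.1 * z^ij.1) * (q ij.2 * z^ij.2)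
        = z ^ n • (∑ ij ∈ Finset.HasAntidiagonal.antidiagonal n, coC ij.1 * q ij.2) := by
      intro n
      rw [smul_eq_mul, Finset.mul_sum]
      apply Finset.sum_congr rfl
      intro ij hij
      rw [Finset.HasAntidiagonal.mem_antidiagonal] at hij
      rw [← hij, pow_add]
      ring
    simp only [hterm] at h5
    rw [zero_add]
    exact h5
  -- explicit sin power series at 0
  have hsinps : HasFPowerSeriesAt Complex.sin (FormalMultilinearSeries.ofScalars ℂ sC) 0 := by
    rw [hasFPowerSeriesAt_iff]
    filter_upwards with z
    have := hsin z
    simp only [MC_ofScalars_coeff, zero_add]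
    refine this.congr fun n => rfl
  -- uniqueness of power series coefficients
  have huniq : ∀ n, ∑ ij ∈ Finset.HasAntidiagonal.antidiagonal n, coC ij.1 * q ij.2 = sC n := by
    intro n
    have h7 := hconv.eq_formalMultilinearSeries hsinps
    have h8 := congrArg (fun pp : FormalMultilinearSeries ℂ ℂ ℂ =>
      FormalMultilinearSeries.coeff pp n) h7
    simpa [MC_ofScalars_coeff] using h8
  -- algebraic convolution identity, cast to ℂ
  have halg : ∀ n, ∑ ij ∈ Finset.HasAntidiagonal.antidiagonal n, coC ij.1 * cC ij.2 = sC n := by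
    intro n
    have h9 := MC_conv m h0 hrec n
    have h10 := congrArg (fun r : ℚ => (r : ℂ)) h9
    push_cast at h10
    simpa [hcoC, hcC, hsC] using h10
  -- identification of coefficients
  have hqc : ∀ n, q n = cC n := by
    intro n
    induction n using Nat.strong_induction_on with
    | _ n ih =>
      have hsub : ∑ ij ∈ Finset.HasAntidiagonal.antidiagonal n, coC ij.1 * (q ij.2 - cC ij.2) = 0 := by
        have h11 : ∑ ij ∈ Finset.HasAntidiagonal.antidiagonal n, coC ij.1 * (q ij.2 - cC ij.2)
            = (∑ ij ∈ Finset.HasAntidiagonal.antidiagonal n, coC ij.1 * q ij.2)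
              - ∑ ij ∈ Finset.HasAntidiagonal.antidiagonal n, coC ij.1 * cC ij.2 := by
          rw [← Finset.sum_sub_distrib]
          apply Finset.sum_congr rfl
          intros; ring
        rw [h11, huniq n, halg n, sub_self]
      rw [Finset.Nat.sum_antidiagonal_eq_sum_range_succ_mk] at hsub
      have hsingle : ∑ i ∈ Finset.range (n+1),
          coC (i, n - i).1 * (q (i, n - i).2 - cC (i, n - i).2)
          = coC 0 * (q n - cC n) := by
        apply Finset.sum_eq_single_of_mem 0 (Finset.mem_range.mpr (by omega))
        intro i hi hi0
        rw [Finset.mem_range] at hi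
        have : q (i, n - i).2 = cC (i, n - i).2 := ih (n - i) (by omega)
        rw [this, sub_self, mul_zero]
      rw [hsingle] at hsub
      have hco0 : coC 0 = 1 := by
        simp [hcoC, MCcos]
      rw [hco0, one_mul, sub_eq_zero] at hsub
      exact hsub
  -- final assembly
  have habs : ‖(y : ℂ)‖ < Rr := by
    rw [Complex.norm_real, Real.norm_eq_abs, abs_of_pos hy0]
    exact hRy
  have h12 := hq_sum (y : ℂ) habs
  simp only [hqc] at h12
  -- reindex to odd indices
  have hinj : Function.Injective (fun k : ℕ => 2 * k + 1) := by
    intro a b h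
    beta_reduce at h
    omega
  rw [← Function.Injective.hasSum_iff hinj ?_] at h12
  · -- h12 : HasSum (fun k => cC (2k+1) * y^(2k+1)) (tan y)
    have hy' : ((y : ℂ)) ≠ 0 := by
      exact_mod_cast Complex.ofReal_ne_zero.mpr hy0.ne'
    have h13 := h12.div_const (y : ℂ)
    have heq2 : (fun k : ℕ => ((fun n : ℕ => cC n * (y:ℂ) ^ n) ∘ (fun k : ℕ => 2 * k + 1)) k
        / (y : ℂ)) = fun k : ℕ => (((m k : ℝ) * (y^2)^k : ℝ) : ℂ) := by
      funext k
      have h1 : (2*k+1) % 2 = 1 := by omega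
      have h2 : (2*k+1) / 2 = k := by omega
      simp only [Function.comp, hcC, MCspread, h1, h2, if_pos]
      rw [pow_succ, ← pow_mul]
      push_cast
      field_simp
    rw [heq2] at h13
    have h14 : ((Real.tan y / y : ℝ) : ℂ) = Complex.tan (y : ℂ) / (y : ℂ) := by
      push_cast [Complex.ofReal_tan]
      ring
    rw [← h14] at h13
    exact Complex.hasSum_ofReal.mp h13
  · intro x hx
    have hx2 : x % 2 = 0 := by
      by_contra h
      exact hx ⟨x / 2, by show 2 * (x/2) + 1 = x; omega⟩
    simp only [hcC, MCspread, hx2]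
    norm_num

open Real

/-- The probabilities `m n` of a minimally congested dimer covering of an interval of `2n`
sites, defined by `m 0 = 1` and `(2n+1) m n = ∑_{k=0}^{n-1} m k · m (n-1-k)`, have the
generating function `∑ m n xⁿ = tan(√x)/√x` (on the disc of convergence `x < (π/2)²`). -/
theorem minimal_congestion_gf (m : ℕ → ℚ) (h0 : m 0 = 1)
    (hrec : ∀ n : ℕ, 1 ≤ n →
      (2 * (n : ℚ) + 1) * m n = ∑ k ∈ Finset.range n, m k * m (n - 1 - k)) :
    ∀ x : ℝ, 0 < x → x < (π / 2) ^ 2 →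
      ∑' n : ℕ, (m n : ℝ) * x ^ n = Real.tan (Real.sqrt x) / Real.sqrt x := by
  intro x hx0 hx
  have hy0 : 0 < Real.sqrt x := Real.sqrt_pos.mpr hx0
  have hy : Real.sqrt x < π / 2 := by
    have h1 : Real.sqrt x < Real.sqrt ((π/2)^2) := Real.sqrt_lt_sqrt hx0.le hx
    rwa [Real.sqrt_sq (by positivity)] at h1
  have hyx : (Real.sqrt x) ^ 2 = x := Real.sq_sqrt hx0.le
  have h2 := MC_hasSum m h0 hrec hy0 hy
  rw [hyx] at h2
  exact h2.tsum_eq
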